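/- arXiv:1210.0372 — 2 statements merged into one kernel-verified Lean document; each statement's English description precedes it below -/
import Mathlib

section
/- The identity h(z,x,y) = (1 + xz/q)·h(z,x,qy) − (z/q)·(x + qy)·h(z,x,q²y) holds as formal power series in z over ℚ(q,x,y), where h(z,x,y) = Σ_{k≥0} (−1)^k q^{k(k−1)/2} ∏_{j=0}^{k−1}(x + q^j y)/∏_{j=1}^{k}(1 − q^j) · z^k. -/
noncomputable section
open PowerSeries Finset

/-- The field `ℚ(q, x, y)` of rational functions in three indeterminates. -/
abbrev K : Type := FractionRing (MvPolynomial (Fin 3) ℚ)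

/-- The indeterminate `q`. -/
def q : K := algebraMap (MvPolynomial (Fin 3) ℚ) K (MvPolynomial.X 0)
/-- The indeterminate `x`. -/
def x : K := algebraMap (MvPolynomial (Fin 3) ℚ) K (MvPolynomial.X 1)
/-- The indeterminate `y`. -/
def y : K := algebraMap (MvPolynomial (Fin 3) ℚ) K (MvPolynomial.X 2)

/-- The coefficient `h_k(a,b) = (−1)^k q^{k(k−1)/2} ∏_{j=0}^{k−1}(a+q^j b) / ∏_{j=1}^{k}(1−q^j)`. -/
def hk (a b : K) (k : ℕ) : K :=
  (-1) ^ k * q ^ (k.choose 2) * (∏ j ∈ range k, (a + q ^ j * b)) /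
    (∏ j ∈ range k, (1 - q ^ (j + 1)))

/-- The series `h(z,a,b) = Σ_k h_k(a,b) z^k`. -/
def hser (a b : K) : PowerSeries K := PowerSeries.mk (hk a b)

lemma algmap_inj : Function.Injective (algebraMap (MvPolynomial (Fin 3) ℚ) K) :=
  IsFractionRing.injective _ _

lemma q_ne_zero : q ≠ 0 := by
  intro h
  have := algmap_inj (h.trans (map_zero _).symm)
  simpa using congrArg (MvPolynomial.eval (fun i => if i = 0 then (1:ℚ) else 0)) this

lemma q_pow_ne_one (m : ℕ) : (1 : K) - q ^ (m+1) ≠ 0 := by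
  intro h
  have h2 : q ^ (m+1) = 1 := by linear_combination -h
  rw [q, ← map_pow, ← map_one (algebraMap (MvPolynomial (Fin 3) ℚ) K)] at h2
  have := algmap_inj h2
  simpa using congrArg (MvPolynomial.eval (fun _ => (0:ℚ))) this

lemma xqy_ne_zero : x + q * y ≠ 0 := by
  intro h
  rw [x, q, y, ← map_mul, ← map_add, ← map_zero (algebraMap (MvPolynomial (Fin 3) ℚ) K)] at h
  have := algmap_inj h
  simpa using congrArg (MvPolynomial.eval (fun i => if i = 1 then (1:ℚ) else 0)) this

lemma D_ne_zero (n : ℕ) : (∏ j ∈ range n, ((1:K) - q ^ (j+1))) ≠ 0 :=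
  Finset.prod_ne_zero_iff.2 fun j _ => q_pow_ne_one j

set_option maxHeartbeats 1000000 in
lemma key (n : ℕ) :
    hk x y (n+1) = hk x (q*y) (n+1) + x/q * hk x (q*y) n - (x+q*y)/q * hk x (q^2*y) n := by
  have e1 : ∀ k : ℕ, (∏ j ∈ range k, (x + q^j*(q*y))) = ∏ j ∈ range k, (x + q^(j+1)*y) :=
    fun k => Finset.prod_congr rfl fun j _ => by ring
  have e2 : (∏ j ∈ range n, (x + q^j*(q^2*y))) = ∏ j ∈ range n, (x + q^(j+2)*y) :=
    Finset.prod_congr rfl fun j _ => by ring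
  have hB : (∏ j ∈ range n, (x + q^(j+2)*y)) * (x + q^0 * (q*y))
      = ∏ j ∈ range (n+1), (x + q^(j+1)*y) := by
    rw [Finset.prod_range_succ' (fun j => x + q^(j+1)*y) n]
    congr 1
    ring
  have hA1 : (∏ j ∈ range (n+1), (x + q^j*y))
      = (∏ j ∈ range n, (x + q^(j+1)*y)) * (x + y) := by
    rw [Finset.prod_range_succ' (fun j => x + q^j*y) n]
    congr 1
    ring
  have hA2 : (∏ j ∈ range (n+1), (x + q^(j+1)*y))
      = (∏ j ∈ range n, (x + q^(j+1)*y)) * (x + q^(n+1)*y) :=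
    Finset.prod_range_succ _ _
  have hB' : (∏ j ∈ range n, (x + q^(j+2)*y))
      = (∏ j ∈ range n, (x + q^(j+1)*y)) * (x + q^(n+1)*y) / (x + q*y) := by
    rw [eq_div_iff xqy_ne_zero]
    rw [← hA2, ← hB]; ring
  have hD : (∏ j ∈ range (n+1), ((1:K) - q^(j+1)))
      = (∏ j ∈ range n, ((1:K) - q^(j+1))) * (1 - q^(n+1)) :=
    Finset.prod_range_succ _ _
  have hc : (n+1).choose 2 = n.choose 2 + n := by
    rw [Nat.choose_succ_succ]; simp [Nat.choose_one_right, Nat.add_comm]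
  unfold hk
  rw [e1, e1, e2, hA1, hA2, hB', hD, hc]
  have hq := q_ne_zero
  have hdn := D_ne_zero n
  have hd1 := q_pow_ne_one n
  have hxy := xqy_ne_zero
  have hqn1 : q^(n+1) = q^n * q := pow_succ q n
  rw [pow_add q (n.choose 2) n, pow_succ (-1 : K) n, hqn1]
  generalize (∏ j ∈ range n, (x + q^(j+1)*y)) = A
  generalize (∏ j ∈ range n, ((1:K) - q^(j+1))) = D at hdn
  generalize q^(n.choose 2) = c
  rw [hqn1] at hd1
  generalize q^n = t at hd1 ⊢
  generalize (-1 : K)^n = e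
  have hxy' : x + y * q ≠ 0 := by rw [mul_comm]; exact hxy
  field_simp
  ring

/-- Formula (2.14): `h(z,x,y) = (1 + xz/q)·h(z,x,qy) − (z/q)(x+qy)·h(z,x,q²y)`
as formal power series in `z` over `ℚ(q,x,y)`. -/
theorem h_three_term :
    hser x y =
      (1 + C (x / q) * X) * hser x (q * y)
        - C ((x + q * y) / q) * X * hser x (q ^ 2 * y) := by
  have hrw : (1 + C (x / q) * X) * hser x (q * y)
        - C ((x + q * y) / q) * X * hser x (q ^ 2 * y)
      = hser x (q * y) + X * (C (x / q) * hser x (q * y))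
        - X * (C ((x + q * y) / q) * hser x (q ^ 2 * y)) := by ring
  rw [hrw]
  ext n
  cases n with
  | zero => simp [hser, hk]
  | succ n =>
    rw [map_sub, map_add, coeff_succ_X_mul, coeff_succ_X_mul, coeff_C_mul, coeff_C_mul]
    simp only [hser, coeff_mk]
    exact key n

end
end

section
/- With h(z,x,y) as in the previous definitions, the series f(z,x,y) := h(z,x,qy)/h(z,x,y) equals (x + y·F(z,x,y))/(x+y), where F(z,x,y) = h(qz,x,y)/h(z,x,y). -/
noncomputable section
open PowerSeries Finset

lemma xy_ne_zero : x + y ≠ 0 := by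
  intro h
  rw [x, y, ← map_add] at h
  have h2 : (MvPolynomial.X 1 + MvPolynomial.X 2 : MvPolynomial (Fin 3) ℚ) = 0 :=
    (map_eq_zero_iff _ (IsFractionRing.injective (MvPolynomial (Fin 3) ℚ) K)).mp h
  have := congrArg (MvPolynomial.eval (fun i => if i = 1 then (1 : ℚ) else 0)) h2
  simp at this

lemma hk_rec (k : ℕ) : (x + y) * hk x (q * y) k = (x + y * q ^ k) * hk x y k := by
  have hP : (x + y) * ∏ j ∈ range k, (x + q ^ j * (q * y))
      = (x + y * q ^ k) * ∏ j ∈ range k, (x + q ^ j * y) := by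
    have e : ∀ j ∈ range k, x + q ^ j * (q * y) = x + q ^ (j + 1) * y := by
      intro j _; ring
    rw [Finset.prod_congr rfl e]
    have h1 := Finset.prod_range_succ' (fun j => x + q ^ j * y) k
    have h2 := Finset.prod_range_succ (fun j => x + q ^ j * y) k
    simp only [pow_zero, one_mul] at h1 h2
    calc (x + y) * ∏ j ∈ range k, (x + q ^ (j + 1) * y)
        = ∏ j ∈ range (k + 1), (x + q ^ j * y) := by rw [h1]; ring
      _ = (x + y * q ^ k) * ∏ j ∈ range k, (x + q ^ j * y) := by rw [h2]; ring
  simp only [hk, mul_div_assoc']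
  congr 1
  linear_combination ((-1 : K) ^ k * q ^ (k.choose 2)) * hP

lemma key_s10 : C (x + y) * hser x (q * y)
    = C x * hser x y + C y * rescale q (hser x y) := by
  ext k
  rw [PowerSeries.coeff_C_mul, map_add, PowerSeries.coeff_C_mul, PowerSeries.coeff_C_mul,
    PowerSeries.coeff_rescale]
  simp only [hser, PowerSeries.coeff_mk]
  linear_combination hk_rec k

/-- Formula (2.10): `f(z,x,y) := h(z,x,qy)/h(z,x,y)` equals `(x + y·F(z,x,y))/(x+y)`,
where `F(z,x,y) = h(qz,x,y)/h(z,x,y)`. -/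
theorem f_as_h_quotient :
    hser x (q * y) * (hser x y)⁻¹ =
      C (x + y)⁻¹ * (C x + C y * (rescale q (hser x y) * (hser x y)⁻¹)) := by
  have hH : constantCoeff (hser x y) = 1 := by
    simp [hser, hk]
  have h1 : hser x y * (hser x y)⁻¹ = 1 :=
    PowerSeries.mul_inv_cancel _ (by rw [hH]; exact one_ne_zero)
  have h2 : hser x (q * y)
      = C (x + y)⁻¹ * (C x * hser x y + C y * rescale q (hser x y)) := by
    calc hser x (q * y)
        = C (x + y)⁻¹ * (C (x + y) * hser x (q * y)) := by
          rw [← mul_assoc, ← map_mul, inv_mul_cancel₀ xy_ne_zero, map_one, one_mul]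
      _ = _ := by rw [key_s10]
  rw [h2, mul_assoc, add_mul, mul_assoc (C x), h1, mul_one, mul_assoc]

end
end
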